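/- Let p and q be prime numbers with p ≥ 5, q ≥ 5, p ≡ 2 or −2 (mod 9), and q ≡ 2 or −2 (mod 9). Then none of the three equations X³ + 2Y³ + pq·Z³ = 0, X³ + q·Y³ + 2p·Z³ = 0, and X³ + p·Y³ + 2q·Z³ = 0 has a solution (X, Y, Z) ∈ ℚ₃³ with (X, Y, Z) ≠ (0, 0, 0). -/

import Mathlib

private lemma zmod9_final : ∀ u v w : ZMod 9, (u=0∨u=1∨u=8) → (v=0∨v=1∨v=8) → (w=0∨w=1∨w=8) →
    ∀ B C : ZMod 9, (B=2∨B=7) → (C=4∨C=5) → u + B*v + C*w = 0 → u=0 ∧ v=0 ∧ w=0 := by decide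

private lemma zmod9_unit_cube : ∀ u : ZMod 9, IsUnit u → u^3 = 1 ∨ u^3 = 8 := by decide

private lemma cube_image (t : ℤ_[3]) :
    (PadicInt.toZModPow 2 (t^3) = 0 ∨ PadicInt.toZModPow 2 (t^3) = 1 ∨
      PadicInt.toZModPow 2 (t^3) = 8 : Prop) := by
  by_cases ht : IsUnit t
  · have hu : IsUnit ((PadicInt.toZModPow 2 t : ZMod 9)) := ht.map _
    rcases zmod9_unit_cube _ hu with h | h
    · right; left; rw [map_pow]; exact h
    · right; right; rw [map_pow]; exact h
  · rw [PadicInt.not_isUnit_iff, PadicInt.norm_lt_one_iff_dvd] at ht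
    obtain ⟨r, rfl⟩ := ht
    left
    have h27 : (((3:ℕ):ℤ_[3]) * r)^3 = ((27:ℕ):ℤ_[3]) * r^3 := by push_cast; ring
    rw [h27, map_mul, map_natCast]
    have : ((27:ℕ) : ZMod 9) = 0 := by decide
    rw [this, zero_mul]

private lemma keylemma (b c : ℕ) (hb : b % 9 = 2 ∨ b % 9 = 7) (hc : c % 9 = 4 ∨ c % 9 = 5) :
    ¬∃ X Y Z : ℚ_[3], (X, Y, Z) ≠ (0, 0, 0) ∧
      X ^ 3 + (b : ℚ_[3]) * Y ^ 3 + (c : ℚ_[3]) * Z ^ 3 = 0 := by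
  rintro ⟨X, Y, Z, hne, heq⟩
  have hex : X ≠ 0 ∨ Y ≠ 0 ∨ Z ≠ 0 := by
    by_contra h
    push_neg at h
    exact hne (by simp [h.1, h.2.1, h.2.2])
  set M : ℝ := max (max ‖X‖ ‖Y‖) ‖Z‖ with hM
  have hMX : ‖X‖ ≤ M := le_trans (le_max_left _ _) (le_max_left _ _)
  have hMY : ‖Y‖ ≤ M := le_trans (le_max_right _ _) (le_max_left _ _)
  have hMZ : ‖Z‖ ≤ M := le_max_right _ _
  have hMpos : 0 < M := by
    rcases hex with h | h | h
    · exact lt_of_lt_of_le (norm_pos_iff.mpr h) hMX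
    · exact lt_of_lt_of_le (norm_pos_iff.mpr h) hMY
    · exact lt_of_lt_of_le (norm_pos_iff.mpr h) hMZ
  have hMcases : M = ‖X‖ ∨ M = ‖Y‖ ∨ M = ‖Z‖ := by
    rcases max_choice (max ‖X‖ ‖Y‖) ‖Z‖ with h | h
    · rcases max_choice ‖X‖ ‖Y‖ with h' | h'
      · left; rw [hM, h, h']
      · right; left; rw [hM, h, h']
    · right; right; rw [hM, h]
  obtain ⟨w, hwM, hw⟩ : ∃ w : ℚ_[3], ‖w‖ = M ∧ (w = X ∨ w = Y ∨ w = Z) := by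
    rcases hMcases with h | h | h
    · exact ⟨X, h.symm, Or.inl rfl⟩
    · exact ⟨Y, h.symm, Or.inr (Or.inl rfl)⟩
    · exact ⟨Z, h.symm, Or.inr (Or.inr rfl)⟩
  have hwne : w ≠ 0 := by
    intro h; rw [h, norm_zero] at hwM; exact absurd hwM.symm (ne_of_gt hMpos)
  set s : ℚ_[3] := w⁻¹ with hs
  have hsn : ‖s‖ = M⁻¹ := by rw [hs, norm_inv, hwM]
  have hle : ∀ T : ℚ_[3], ‖T‖ ≤ M → ‖s * T‖ ≤ 1 := by
    intro T hT
    rw [norm_mul, hsn]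
    calc M⁻¹ * ‖T‖ ≤ M⁻¹ * M := by
          exact mul_le_mul_of_nonneg_left hT (inv_nonneg.mpr hMpos.le)
      _ = 1 := inv_mul_cancel₀ (ne_of_gt hMpos)
  set x : ℤ_[3] := ⟨s * X, hle X hMX⟩ with hx
  set y : ℤ_[3] := ⟨s * Y, hle Y hMY⟩ with hy
  set z : ℤ_[3] := ⟨s * Z, hle Z hMZ⟩ with hz
  have hsw : ‖s * w‖ = 1 := by
    rw [norm_mul, hsn, hwM, inv_mul_cancel₀ (ne_of_gt hMpos)]
  have hcube : x ^ 3 + (b : ℤ_[3]) * y ^ 3 + (c : ℤ_[3]) * z ^ 3 = 0 := by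
    apply Subtype.ext
    push_cast [hx, hy, hz]
    change (s * X) ^ 3 + (b : ℚ_[3]) * (s * Y) ^ 3 + (c : ℚ_[3]) * (s * Z) ^ 3 = 0
    linear_combination s ^ 3 * heq
  have hunit : IsUnit x ∨ IsUnit y ∨ IsUnit z := by
    rcases hw with h | h | h
    · left; rw [PadicInt.isUnit_iff]; rw [h] at hsw; exact hsw
    · right; left; rw [PadicInt.isUnit_iff]; rw [h] at hsw; exact hsw
    · right; right; rw [PadicInt.isUnit_iff]; rw [h] at hsw; exact hsw
  set φ := PadicInt.toZModPow (p := 3) 2 with hφ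
  have him : φ (x^3) + (b : ZMod 9) * φ (y^3) + (c : ZMod 9) * φ (z^3) = 0 := by
    have := congrArg φ hcube
    simpa [map_add, map_mul, map_natCast] using this
  have hB : ((b : ZMod 9) = 2 ∨ (b : ZMod 9) = 7) := by
    rcases hb with h | h
    · left; rw [← ZMod.natCast_mod b 9, h]; rfl
    · right; rw [← ZMod.natCast_mod b 9, h]; rfl
  have hC : ((c : ZMod 9) = 4 ∨ (c : ZMod 9) = 5) := by
    rcases hc with h | h
    · left; rw [← ZMod.natCast_mod c 9, h]; rfl
    · right; rw [← ZMod.natCast_mod c 9, h]; rfl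
  have hall := zmod9_final _ _ _ (cube_image x) (cube_image y) (cube_image z) _ _ hB hC him
  haveI : Nontrivial (ZMod (3^2)) := by
    haveI : Fact (1 < 3^2) := ⟨by norm_num⟩
    exact ZMod.nontrivial _
  rcases hunit with h | h | h
  · exact ((h.pow 3).map φ).ne_zero hall.1
  · exact ((h.pow 3).map φ).ne_zero hall.2.1
  · exact ((h.pow 3).map φ).ne_zero hall.2.2




/-- Let `p, q ≥ 5` be primes with `p ≡ ±2 (mod 9)` and `q ≡ ±2 (mod 9)`.
Then none of `X³ + 2Y³ + pq·Z³ = 0`, `X³ + qY³ + 2p·Z³ = 0`, `X³ + pY³ + 2q·Z³ = 0`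
has a nontrivial solution in `ℚ₃`. -/
theorem stmt9 (p q : ℕ) (hp : p.Prime) (hq : q.Prime) (hp5 : 5 ≤ p) (hq5 : 5 ≤ q)
    (hp9 : p % 9 = 2 ∨ p % 9 = 7) (hq9 : q % 9 = 2 ∨ q % 9 = 7) :
    (¬∃ X Y Z : ℚ_[3], (X, Y, Z) ≠ (0, 0, 0) ∧
        X ^ 3 + 2 * Y ^ 3 + (p : ℚ_[3]) * (q : ℚ_[3]) * Z ^ 3 = 0) ∧
    (¬∃ X Y Z : ℚ_[3], (X, Y, Z) ≠ (0, 0, 0) ∧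
        X ^ 3 + (q : ℚ_[3]) * Y ^ 3 + 2 * (p : ℚ_[3]) * Z ^ 3 = 0) ∧
    (¬∃ X Y Z : ℚ_[3], (X, Y, Z) ≠ (0, 0, 0) ∧
        X ^ 3 + (p : ℚ_[3]) * Y ^ 3 + 2 * (q : ℚ_[3]) * Z ^ 3 = 0) := by
  have hpq : (p * q) % 9 = 4 ∨ (p * q) % 9 = 5 := by
    rcases hp9 with h1 | h1 <;> rcases hq9 with h2 | h2 <;>
      rw [Nat.mul_mod, h1, h2] <;> simp
  have h2p : (2 * p) % 9 = 4 ∨ (2 * p) % 9 = 5 := by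
    rcases hp9 with h1 | h1 <;> rw [Nat.mul_mod, h1] <;> simp
  have h2q : (2 * q) % 9 = 4 ∨ (2 * q) % 9 = 5 := by
    rcases hq9 with h1 | h1 <;> rw [Nat.mul_mod, h1] <;> simp
  refine ⟨?_, ?_, ?_⟩
  · rintro ⟨X, Y, Z, h1, h2⟩
    exact keylemma 2 (p * q) (Or.inl rfl) hpq ⟨X, Y, Z, h1, by push_cast; exact h2⟩
  · rintro ⟨X, Y, Z, h1, h2⟩
    exact keylemma q (2 * p) hq9 h2p ⟨X, Y, Z, h1, by push_cast; exact h2⟩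
  · rintro ⟨X, Y, Z, h1, h2⟩
    exact keylemma p (2 * q) hp9 h2q ⟨X, Y, Z, h1, by push_cast; exact h2⟩
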